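/- Let R_m be an h × δh rectangle with longest side along direction θ and R_n a k × ηk rectangle with longest side along direction β, both with slopes θ, β ∈ [0, 1/10], and h > k. Then there is an absolute constant C such that for any centers, |R_m ∩ R_n| / (|R_m||R_n|) ≤ C / |R|, where R is a rectangle of dimensions 2h × 2w with longest side along θ, w = max{ηk, δh, k·sin|θ − β|}, centered appropriately; equivalently |R_m ∩ R_n| ≤ C·|R_m||R_n|/(4hw). -/

import Mathlib

open MeasureTheory Set

/-- The rectangle in the plane with center `c`, longest side of length `a` with slope `σ`,
and shorter side of length `b`. -/
def slopeRect (c : ℝ × ℝ) (σ a b : ℝ) : Set (ℝ × ℝ) :=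
  {p | |((p.1 - c.1) + σ * (p.2 - c.2)) / Real.sqrt (1 + σ ^ 2)| ≤ a / 2 ∧
       |((p.2 - c.2) - σ * (p.1 - c.1)) / Real.sqrt (1 + σ ^ 2)| ≤ b / 2}

noncomputable def lmap (a b c d : ℝ) : (ℝ × ℝ) →ₗ[ℝ] (ℝ × ℝ) :=
  Matrix.toLin (Module.Basis.finTwoProd ℝ) (Module.Basis.finTwoProd ℝ) !![a, b; c, d]

lemma lmap_apply (a b c d : ℝ) (p : ℝ × ℝ) :
    lmap a b c d p = (a * p.1 + b * p.2, c * p.1 + d * p.2) := by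
  simp [lmap]

lemma lmap_det (a b c d : ℝ) : LinearMap.det (lmap a b c d) = a * d - b * c := by
  rw [lmap, LinearMap.det_toLin, Matrix.det_fin_two_of]

lemma vol_affine_preimage (M : (ℝ × ℝ) →ₗ[ℝ] (ℝ × ℝ)) (hd : LinearMap.det M ≠ 0)
    (c : ℝ × ℝ) (S : Set (ℝ × ℝ)) :
    volume ((fun p => M p + c) ⁻¹' S) = ENNReal.ofReal |(LinearMap.det M)⁻¹| * volume S := by
  have h1 : (fun p => M p + c) ⁻¹' S = M ⁻¹' ((fun x => x + c) ⁻¹' S) := rfl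
  rw [h1, Measure.addHaar_preimage_linearMap volume hd, measure_preimage_add_right]

lemma vol_affine_box (a b c d e f x₁ y₁ x₂ y₂ : ℝ) (hdet : a * d - b * c ≠ 0) :
    volume {p : ℝ × ℝ | a * p.1 + b * p.2 + e ∈ Icc x₁ y₁ ∧ c * p.1 + d * p.2 + f ∈ Icc x₂ y₂} =
      ENNReal.ofReal |(a * d - b * c)⁻¹| *
        (ENNReal.ofReal (y₁ - x₁) * ENNReal.ofReal (y₂ - x₂)) := by
  have h1 : {p : ℝ × ℝ | a * p.1 + b * p.2 + e ∈ Icc x₁ y₁ ∧ c * p.1 + d * p.2 + f ∈ Icc x₂ y₂}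
      = (fun p => lmap a b c d p + (e, f)) ⁻¹' (Icc x₁ y₁ ×ˢ Icc x₂ y₂) := by
    ext p
    simp [lmap_apply, Set.mem_prod, Prod.ext_iff]; tauto
  rw [h1, vol_affine_preimage _ (by rw [lmap_det]; exact hdet), lmap_det,
    Measure.volume_eq_prod, Measure.prod_prod, Real.volume_Icc, Real.volume_Icc]

lemma vol_rot_box (σ e f x₁ y₁ x₂ y₂ : ℝ) :
    volume {p : ℝ × ℝ |
        (1 / Real.sqrt (1 + σ ^ 2)) * p.1 + (σ / Real.sqrt (1 + σ ^ 2)) * p.2 + e ∈ Icc x₁ y₁ ∧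
        (-(σ / Real.sqrt (1 + σ ^ 2))) * p.1 + (1 / Real.sqrt (1 + σ ^ 2)) * p.2 + f ∈ Icc x₂ y₂}
      = ENNReal.ofReal (y₁ - x₁) * ENNReal.ofReal (y₂ - x₂) := by
  set s := Real.sqrt (1 + σ ^ 2) with hs
  have hs2 : s ^ 2 = 1 + σ ^ 2 := Real.sq_sqrt (by positivity)
  have hs0 : 0 < s := Real.sqrt_pos.2 (by positivity)
  have hdet : (1 / s) * (1 / s) - (σ / s) * (-(σ / s)) = 1 := by
    field_simp
    nlinarith [hs2]
  rw [vol_affine_box _ _ _ _ _ _ _ _ _ _ (by rw [hdet]; norm_num), hdet]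
  norm_num

lemma slopeRect_eq_box (c : ℝ × ℝ) (σ A B : ℝ) :
    slopeRect c σ A B = {p : ℝ × ℝ |
        (1 / Real.sqrt (1 + σ ^ 2)) * p.1 + (σ / Real.sqrt (1 + σ ^ 2)) * p.2 +
          (-((c.1 + σ * c.2) / Real.sqrt (1 + σ ^ 2))) ∈ Icc (-(A / 2)) (A / 2) ∧
        (-(σ / Real.sqrt (1 + σ ^ 2))) * p.1 + (1 / Real.sqrt (1 + σ ^ 2)) * p.2 +
          (-((c.2 - σ * c.1) / Real.sqrt (1 + σ ^ 2))) ∈ Icc (-(B / 2)) (B / 2)} := by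
  ext p
  have e1 : ((p.1 - c.1) + σ * (p.2 - c.2)) / Real.sqrt (1 + σ ^ 2)
      = (1 / Real.sqrt (1 + σ ^ 2)) * p.1 + (σ / Real.sqrt (1 + σ ^ 2)) * p.2 +
        (-((c.1 + σ * c.2) / Real.sqrt (1 + σ ^ 2))) := by ring
  have e2 : ((p.2 - c.2) - σ * (p.1 - c.1)) / Real.sqrt (1 + σ ^ 2)
      = (-(σ / Real.sqrt (1 + σ ^ 2))) * p.1 + (1 / Real.sqrt (1 + σ ^ 2)) * p.2 +
        (-((c.2 - σ * c.1) / Real.sqrt (1 + σ ^ 2))) := by ring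
  simp only [slopeRect, mem_setOf_eq, mem_Icc, abs_le, e1, e2]

lemma volume_slopeRect (c : ℝ × ℝ) (σ A B : ℝ) :
    volume (slopeRect c σ A B) = ENNReal.ofReal A * ENNReal.ofReal B := by
  rw [slopeRect_eq_box, vol_rot_box]
  norm_num

set_option maxHeartbeats 1000000 in
lemma coord_bound {cn : ℝ × ℝ} {β k η : ℝ} (hk : 0 < k) (hη0 : 0 ≤ η) (hη2 : η ≤ 1/2)
    (hβ0 : 0 ≤ β) (hβ1 : β ≤ 1/10) {p : ℝ × ℝ} (hp : p ∈ slopeRect cn β k (η * k)) :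
    |p.1 - cn.1| ≤ 1.1 * k ∧ |p.2 - cn.2| ≤ 0.6 * k := by
  obtain ⟨h1, h2⟩ := hp
  set s := Real.sqrt (1 + β ^ 2) with hs
  have hs2 : s ^ 2 = 1 + β ^ 2 := Real.sq_sqrt (by positivity)
  have hs0 : 0 < s := Real.sqrt_pos.2 (by positivity)
  have hs1 : 1 ≤ s := by nlinarith
  have hsle : s ≤ 1.1 := by nlinarith
  rw [abs_div, abs_of_pos hs0, div_le_iff₀ hs0] at h1 h2
  have hu : |(p.1 - cn.1) + β * (p.2 - cn.2)| ≤ 0.55 * k := by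
    nlinarith [mul_le_mul_of_nonneg_left hsle (by positivity : (0:ℝ) ≤ k / 2)]
  have hv : |(p.2 - cn.2) - β * (p.1 - cn.1)| ≤ 0.3 * k := by
    have h3 : η * k / 2 * s ≤ η * k / 2 * 1.1 :=
      mul_le_mul_of_nonneg_left hsle (by positivity)
    have h4 : η * k ≤ 0.5 * k := by nlinarith
    nlinarith
  have hb2 : (1:ℝ) ≤ 1 + β ^ 2 := by nlinarith [sq_nonneg β]
  have hβv : |β * ((p.2 - cn.2) - β * (p.1 - cn.1))| ≤ 0.03 * k := by
    rw [abs_mul, abs_of_nonneg hβ0]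
    nlinarith [abs_nonneg ((p.2 - cn.2) - β * (p.1 - cn.1))]
  have hβu : |β * ((p.1 - cn.1) + β * (p.2 - cn.2))| ≤ 0.055 * k := by
    rw [abs_mul, abs_of_nonneg hβ0]
    nlinarith [abs_nonneg ((p.1 - cn.1) + β * (p.2 - cn.2))]
  constructor
  · have h5 : (p.1 - cn.1) * (1 + β ^ 2)
        = ((p.1 - cn.1) + β * (p.2 - cn.2)) - β * ((p.2 - cn.2) - β * (p.1 - cn.1)) := by ring
    have h6 : |(p.1 - cn.1) * (1 + β ^ 2)| ≤ 0.58 * k := by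
      rw [h5]
      calc |((p.1 - cn.1) + β * (p.2 - cn.2)) - β * ((p.2 - cn.2) - β * (p.1 - cn.1))|
          ≤ |(p.1 - cn.1) + β * (p.2 - cn.2)| + |β * ((p.2 - cn.2) - β * (p.1 - cn.1))| :=
            abs_sub _ _
        _ ≤ 0.55 * k + 0.03 * k := add_le_add hu hβv
        _ = 0.58 * k := by ring
    rw [abs_mul, abs_of_pos (by linarith : (0:ℝ) < 1 + β ^ 2)] at h6
    nlinarith [abs_nonneg (p.1 - cn.1),
      le_mul_of_one_le_right (abs_nonneg (p.1 - cn.1)) hb2]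
  · have h5 : (p.2 - cn.2) * (1 + β ^ 2)
        = ((p.2 - cn.2) - β * (p.1 - cn.1)) + β * ((p.1 - cn.1) + β * (p.2 - cn.2)) := by ring
    have h6 : |(p.2 - cn.2) * (1 + β ^ 2)| ≤ 0.355 * k := by
      rw [h5]
      calc |((p.2 - cn.2) - β * (p.1 - cn.1)) + β * ((p.1 - cn.1) + β * (p.2 - cn.2))|
          ≤ |(p.2 - cn.2) - β * (p.1 - cn.1)| + |β * ((p.1 - cn.1) + β * (p.2 - cn.2))| :=
            abs_add_le _ _
        _ ≤ 0.3 * k + 0.055 * k := add_le_add hv hβu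
        _ = 0.355 * k := by ring
    rw [abs_mul, abs_of_pos (by linarith : (0:ℝ) < 1 + β ^ 2)] at h6
    nlinarith [abs_nonneg (p.2 - cn.2),
      le_mul_of_one_le_right (abs_nonneg (p.2 - cn.2)) hb2]

set_option maxHeartbeats 2000000 in
/-- Overlap estimate: if `R_m` is an `h × δh` rectangle along slope `θ` and `R_n` a
`k × ηk` rectangle along slope `β`, with `θ, β ∈ [0,1/10]` and `h > k`, then
`|R_m ∩ R_n| ≤ C |R_m||R_n| / (4hw)` with `w = max{ηk, δh, k sin|θ−β|}`, i.e. the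
intersection kernel is dominated by the average over a `2h × 2w` rectangle along `θ`. -/
theorem stmt10 :
    ∃ C : ℝ, 0 < C ∧
    ∀ (cm cn : ℝ × ℝ) (h θ δ k β η : ℝ),
      0 < k → k < h → δ ∈ Ioo (0:ℝ) (1/2) → η ∈ Ioo (0:ℝ) (1/2) →
      θ ∈ Icc (0:ℝ) (1/10) → β ∈ Icc (0:ℝ) (1/10) →
      (volume (slopeRect cm θ h (δ * h) ∩ slopeRect cn β k (η * k))).toReal ≤
        C * (volume (slopeRect cm θ h (δ * h))).toReal *
            (volume (slopeRect cn β k (η * k))).toReal /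
          (4 * h * max (max (η * k) (δ * h)) (k * Real.sin |θ - β|)) := by
  refine ⟨100, by norm_num, ?_⟩
  intro cm cn h θ δ k β η hk hkh hδ hη hθ hβ
  obtain ⟨hδ0, hδ2⟩ := hδ
  obtain ⟨hη0, hη2⟩ := hη
  obtain ⟨hθ0, hθ1⟩ := hθ
  obtain ⟨hβ0, hβ1⟩ := hβ
  have hh : 0 < h := hk.trans hkh
  have hδh : 0 < δ * h := by positivity
  have hηk : 0 < η * k := by positivity
  set w := max (max (η * k) (δ * h)) (k * Real.sin |θ - β|) with hwdef
  have hw0 : 0 < w := lt_of_lt_of_le hηk ((le_max_left _ _).trans (le_max_left _ _))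
  rw [volume_slopeRect, volume_slopeRect, ENNReal.toReal_mul, ENNReal.toReal_mul,
    ENNReal.toReal_ofReal hh.le, ENNReal.toReal_ofReal hδh.le,
    ENNReal.toReal_ofReal hk.le, ENNReal.toReal_ofReal hηk.le]
  set V := (volume (slopeRect cm θ h (δ * h) ∩ slopeRect cn β k (η * k))).toReal with hV
  have hV0 : 0 ≤ V := ENNReal.toReal_nonneg
  have key : V * w ≤ 25 * ((δ * h) * (η * k) * k) := by
    rcases Set.eq_empty_or_nonempty
        (slopeRect cm θ h (δ * h) ∩ slopeRect cn β k (η * k)) with he | ⟨p₀, hp₀m, hp₀n⟩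
    · have hVz : V = 0 := by rw [hV, he, measure_empty, ENNReal.toReal_zero]
      rw [hVz, zero_mul]; positivity
    · -- Bound 2 : intersection inside R_n
      have B2 : V ≤ k * (η * k) := by
        apply ENNReal.toReal_le_of_le_ofReal (by positivity)
        calc volume (slopeRect cm θ h (δ * h) ∩ slopeRect cn β k (η * k))
            ≤ volume (slopeRect cn β k (η * k)) := measure_mono inter_subset_right
          _ = ENNReal.ofReal k * ENNReal.ofReal (η * k) := volume_slopeRect _ _ _ _
          _ = ENNReal.ofReal (k * (η * k)) := (ENNReal.ofReal_mul hk.le).symm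
      -- preliminaries for rotated coordinates
      set sθ := Real.sqrt (1 + θ ^ 2) with hsθdef
      have hsθ2 : sθ ^ 2 = 1 + θ ^ 2 := Real.sq_sqrt (by positivity)
      have hsθ0 : 0 < sθ := Real.sqrt_pos.2 (by positivity)
      have hsθ1 : 1 ≤ sθ := by nlinarith
      have hsθle : sθ ≤ 1.1 := by nlinarith
      -- Bound 1 : intersection inside a 6k × δh box along θ
      have B1 : V ≤ 6 * k * (δ * h) := by
        apply ENNReal.toReal_le_of_le_ofReal (by positivity)
        set t₀ : ℝ := (1 / sθ) * p₀.1 + (θ / sθ) * p₀.2 + (-((cm.1 + θ * cm.2) / sθ)) with ht₀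
        have hsub : slopeRect cm θ h (δ * h) ∩ slopeRect cn β k (η * k) ⊆
            {p : ℝ × ℝ |
              (1 / sθ) * p.1 + (θ / sθ) * p.2 + (-((cm.1 + θ * cm.2) / sθ))
                ∈ Icc (t₀ - 3 * k) (t₀ + 3 * k) ∧
              (-(θ / sθ)) * p.1 + (1 / sθ) * p.2 + (-((cm.2 - θ * cm.1) / sθ))
                ∈ Icc (-(δ * h / 2)) (δ * h / 2)} := by
          rintro p ⟨hpm, hpn⟩
          obtain ⟨hq1, hq2⟩ := coord_bound hk hη0.le hη2.le hβ0 hβ1 hpn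
          obtain ⟨hq1', hq2'⟩ := coord_bound hk hη0.le hη2.le hβ0 hβ1 hp₀n
          obtain ⟨hm1, hm2⟩ := hpm
          constructor
          · rw [mem_Icc]
            have hdiff : (1 / sθ) * p.1 + (θ / sθ) * p.2 + (-((cm.1 + θ * cm.2) / sθ)) - t₀
                = ((p.1 - p₀.1) + θ * (p.2 - p₀.2)) / sθ := by rw [ht₀]; ring
            have hx : |p.1 - p₀.1| ≤ 2.2 * k := by
              have : p.1 - p₀.1 = (p.1 - cn.1) - (p₀.1 - cn.1) := by ring
              rw [this]
              calc |(p.1 - cn.1) - (p₀.1 - cn.1)| ≤ |p.1 - cn.1| + |p₀.1 - cn.1| := abs_sub _ _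
                _ ≤ 2.2 * k := by linarith
            have hy : |p.2 - p₀.2| ≤ 1.2 * k := by
              have : p.2 - p₀.2 = (p.2 - cn.2) - (p₀.2 - cn.2) := by ring
              rw [this]
              calc |(p.2 - cn.2) - (p₀.2 - cn.2)| ≤ |p.2 - cn.2| + |p₀.2 - cn.2| := abs_sub _ _
                _ ≤ 1.2 * k := by linarith
            have habs : |((p.1 - p₀.1) + θ * (p.2 - p₀.2)) / sθ| ≤ 3 * k := by
              rw [abs_div, abs_of_pos hsθ0, div_le_iff₀ hsθ0]
              have h5 : |(p.1 - p₀.1) + θ * (p.2 - p₀.2)|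
                  ≤ |p.1 - p₀.1| + θ * |p.2 - p₀.2| := by
                calc |(p.1 - p₀.1) + θ * (p.2 - p₀.2)|
                    ≤ |p.1 - p₀.1| + |θ * (p.2 - p₀.2)| := abs_add_le _ _
                  _ = |p.1 - p₀.1| + θ * |p.2 - p₀.2| := by rw [abs_mul, abs_of_nonneg hθ0]
              have h6 : 3 * k ≤ 3 * k * sθ := le_mul_of_one_le_right (by positivity) hsθ1
              nlinarith [abs_nonneg (p.2 - p₀.2)]
            rw [← hdiff, abs_le] at habs
            constructor <;> linarith [habs.1, habs.2]
          · rw [mem_Icc]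
            have e2 : (-(θ / sθ)) * p.1 + (1 / sθ) * p.2 + (-((cm.2 - θ * cm.1) / sθ))
                = ((p.2 - cm.2) - θ * (p.1 - cm.1)) / sθ := by ring
            rw [e2]
            have := abs_le.mp hm2
            exact ⟨by linarith [this.1], this.2⟩
        calc volume (slopeRect cm θ h (δ * h) ∩ slopeRect cn β k (η * k))
            ≤ volume {p : ℝ × ℝ |
              (1 / sθ) * p.1 + (θ / sθ) * p.2 + (-((cm.1 + θ * cm.2) / sθ))
                ∈ Icc (t₀ - 3 * k) (t₀ + 3 * k) ∧
              (-(θ / sθ)) * p.1 + (1 / sθ) * p.2 + (-((cm.2 - θ * cm.1) / sθ))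
                ∈ Icc (-(δ * h / 2)) (δ * h / 2)} := measure_mono hsub
          _ = ENNReal.ofReal ((t₀ + 3 * k) - (t₀ - 3 * k))
              * ENNReal.ofReal (δ * h / 2 - -(δ * h / 2)) := vol_rot_box θ _ _ _ _ _ _
          _ = ENNReal.ofReal (6 * k) * ENNReal.ofReal (δ * h) := by
              rw [show (t₀ + 3 * k) - (t₀ - 3 * k) = 6 * k by ring,
                show δ * h / 2 - -(δ * h / 2) = δ * h by ring]
          _ = ENNReal.ofReal (6 * k * (δ * h)) := (ENNReal.ofReal_mul (by positivity)).symm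
      -- Bound 3 : strip-strip estimate
      have B3 : V * Real.sin |θ - β| ≤ 2 * ((δ * h) * (η * k)) := by
        by_cases hθβ : θ = β
        · rw [hθβ, sub_self, abs_zero, Real.sin_zero, mul_zero]
          positivity
        · set sβ := Real.sqrt (1 + β ^ 2) with hsβdef
          have hsβ2 : sβ ^ 2 = 1 + β ^ 2 := Real.sq_sqrt (by positivity)
          have hsβ0 : 0 < sβ := Real.sqrt_pos.2 (by positivity)
          have hsβ1 : 1 ≤ sβ := by nlinarith
          have hsβle : sβ ≤ 1.1 := by nlinarith
          have hba : β - θ ≠ 0 := sub_ne_zero.2 (Ne.symm hθβ)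
          have habs0 : (0:ℝ) < |β - θ| := abs_pos.2 hba
          have hdet : (-(θ / sθ)) * (1 / sβ) - (1 / sθ) * (-(β / sβ)) = (β - θ) / (sθ * sβ) := by
            field_simp
            ring
          have hdetne : (-(θ / sθ)) * (1 / sβ) - (1 / sθ) * (-(β / sβ)) ≠ 0 := by
            rw [hdet]
            exact div_ne_zero hba (by positivity)
          have hinv : |((-(θ / sθ)) * (1 / sβ) - (1 / sθ) * (-(β / sβ)))⁻¹|
              = sθ * sβ / |β - θ| := by
            rw [hdet, inv_div, abs_div, abs_of_pos (by positivity : (0:ℝ) < sθ * sβ)]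
          have hVb : V ≤ sθ * sβ / |β - θ| * ((δ * h) * (η * k)) := by
            apply ENNReal.toReal_le_of_le_ofReal (by positivity)
            have hsub : slopeRect cm θ h (δ * h) ∩ slopeRect cn β k (η * k) ⊆
                {p : ℝ × ℝ |
                  (-(θ / sθ)) * p.1 + (1 / sθ) * p.2 + (-((cm.2 - θ * cm.1) / sθ))
                    ∈ Icc (-(δ * h / 2)) (δ * h / 2) ∧
                  (-(β / sβ)) * p.1 + (1 / sβ) * p.2 + (-((cn.2 - β * cn.1) / sβ))
                    ∈ Icc (-(η * k / 2)) (η * k / 2)} := by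
              rintro p ⟨hpm, hpn⟩
              obtain ⟨hm1, hm2⟩ := hpm
              obtain ⟨hn1, hn2⟩ := hpn
              constructor
              · rw [mem_Icc]
                have e2 : (-(θ / sθ)) * p.1 + (1 / sθ) * p.2 + (-((cm.2 - θ * cm.1) / sθ))
                    = ((p.2 - cm.2) - θ * (p.1 - cm.1)) / sθ := by ring
                rw [e2]
                have := abs_le.mp hm2
                exact ⟨by linarith [this.1], this.2⟩
              · rw [mem_Icc]
                have e2 : (-(β / sβ)) * p.1 + (1 / sβ) * p.2 + (-((cn.2 - β * cn.1) / sβ))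
                    = ((p.2 - cn.2) - β * (p.1 - cn.1)) / sβ := by ring
                rw [e2]
                have := abs_le.mp hn2
                exact ⟨by linarith [this.1], this.2⟩
            calc volume (slopeRect cm θ h (δ * h) ∩ slopeRect cn β k (η * k))
                ≤ volume {p : ℝ × ℝ |
                  (-(θ / sθ)) * p.1 + (1 / sθ) * p.2 + (-((cm.2 - θ * cm.1) / sθ))
                    ∈ Icc (-(δ * h / 2)) (δ * h / 2) ∧
                  (-(β / sβ)) * p.1 + (1 / sβ) * p.2 + (-((cn.2 - β * cn.1) / sβ))
                    ∈ Icc (-(η * k / 2)) (η * k / 2)} := measure_mono hsub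
              _ = ENNReal.ofReal |((-(θ / sθ)) * (1 / sβ) - (1 / sθ) * (-(β / sβ)))⁻¹|
                  * (ENNReal.ofReal (δ * h / 2 - -(δ * h / 2))
                    * ENNReal.ofReal (η * k / 2 - -(η * k / 2))) :=
                  vol_affine_box _ _ _ _ _ _ _ _ _ _ hdetne
              _ = ENNReal.ofReal (sθ * sβ / |β - θ|)
                  * (ENNReal.ofReal (δ * h) * ENNReal.ofReal (η * k)) := by
                  rw [hinv]; norm_num
              _ = ENNReal.ofReal (sθ * sβ / |β - θ| * ((δ * h) * (η * k))) := by
                  rw [← ENNReal.ofReal_mul hδh.le, ← ENNReal.ofReal_mul (by positivity)]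
          have hsin0 : 0 ≤ Real.sin |θ - β| :=
            Real.sin_nonneg_of_nonneg_of_le_pi (abs_nonneg _)
              (by
                have h1 : |θ - β| ≤ 1 / 10 := abs_le.2 ⟨by linarith, by linarith⟩
                linarith [Real.pi_gt_three])
          have hsinle : Real.sin |θ - β| ≤ |β - θ| := by
            rw [abs_sub_comm β θ]
            exact Real.sin_le (abs_nonneg _)
          calc V * Real.sin |θ - β|
              ≤ sθ * sβ / |β - θ| * ((δ * h) * (η * k)) * |β - θ| :=
                mul_le_mul hVb hsinle hsin0 (by positivity)
            _ = sθ * sβ * ((δ * h) * (η * k)) := by field_simp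
            _ ≤ 2 * ((δ * h) * (η * k)) := by
                nlinarith [mul_le_mul hsθle hsβle hsβ0.le (by norm_num : (0:ℝ) ≤ 1.1),
                  mul_pos hδh hηk]
      -- combine via case analysis on the max
      rcases max_choice (max (η * k) (δ * h)) (k * Real.sin |θ - β|) with h1 | h1
      · rw [hwdef, h1]
        rcases max_choice (η * k) (δ * h) with h2 | h2 <;> rw [h2]
        · nlinarith [mul_le_mul_of_nonneg_right B1 hηk.le]
        · nlinarith [mul_le_mul_of_nonneg_right B2 hδh.le]
      · rw [hwdef, h1]
        nlinarith [mul_le_mul_of_nonneg_left B3 hk.le]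
  rw [le_div_iff₀ (by positivity)]
  calc V * (4 * h * w) = (4 * h) * (V * w) := by ring
    _ ≤ (4 * h) * (25 * ((δ * h) * (η * k) * k)) :=
        mul_le_mul_of_nonneg_left key (by positivity)
    _ = 100 * (h * (δ * h)) * (k * (η * k)) := by ring
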